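/- For every real ν > 0 and every y > 0, K_ν(y)/K_{ν+1}(y) > (1/y)·(y²/(√(y² + (ν+1)²) − (ν+1)) − 2(ν+1)). -/

import Mathlib

open Real Filter MeasureTheory Set Asymptotics Topology

/-- The modified Bessel function of the second kind (Macdonald function),
via its integral representation `K_ν(y) = ∫_0^∞ exp(-y cosh t) cosh(ν t) dt`. -/
noncomputable def besselK (ν y : ℝ) : ℝ :=
  ∫ t in Set.Ioi (0 : ℝ), Real.exp (-y * Real.cosh t) * Real.cosh (ν * t)

lemma tendsto_ycosh (y c : ℝ) (hy : 0 < y) :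
    Tendsto (fun t => y * Real.cosh t - c * t) atTop atTop := by
  have h1 : Tendsto (fun t : ℝ => t * (y / 2 * (Real.exp t / t) - c)) atTop atTop := by
    apply Tendsto.atTop_mul_atTop₀ tendsto_id
    apply tendsto_atTop_add_const_right
    exact ((tendsto_exp_div_pow_atTop 1).congr (fun x => by rw [pow_one])).const_mul_atTop (by positivity)
  apply tendsto_atTop_mono' _ _ h1
  filter_upwards [eventually_gt_atTop 0] with t ht
  have : Real.cosh t ≥ Real.exp t / 2 := by
    rw [Real.cosh_eq]; have := Real.exp_pos (-t); linarith
  have h2 : t * (y / 2 * (Real.exp t / t) - c) = y / 2 * Real.exp t - c * t := by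
    field_simp
  rw [h2]; nlinarith

lemma isLittleO_expcosh (y c : ℝ) (hy : 0 < y) :
    (fun t => Real.exp (-y * Real.cosh t + c * t)) =o[atTop] fun t => Real.exp (-t) := by
  rw [Real.isLittleO_exp_comp_exp_comp]
  exact (tendsto_ycosh y (c + 1) hy).congr (fun t => by ring)

lemma cosh_le_exp_abs (x : ℝ) : Real.cosh x ≤ Real.exp |x| := by
  rw [← Real.cosh_abs, Real.cosh_eq]
  have h := Real.exp_le_exp.2 (neg_abs_le x)
  have := Real.exp_le_exp.2 (le_abs_self x)
  linarith

lemma abs_sinh_le_exp_abs (x : ℝ) : |Real.sinh x| ≤ Real.exp |x| := by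
  rw [Real.abs_sinh, Real.sinh_eq]
  have h := Real.exp_pos (-|x|)
  have := Real.exp_pos |x|
  linarith

lemma integrableOn_expcosh {y : ℝ} (hy : 0 < y) {g : ℝ → ℝ} (hg : Continuous g)
    {C c : ℝ} (hbound : ∀ t, 0 ≤ t → |g t| ≤ C * Real.exp (c * t)) :
    IntegrableOn (fun t => Real.exp (-y * Real.cosh t) * g t) (Ioi 0) := by
  apply integrable_of_isBigO_exp_neg (one_pos)
  · exact ((Real.continuous_exp.comp
      (continuous_const.mul Real.continuous_cosh)).mul hg).continuousOn
  · have h1 : (fun t => Real.exp (-y * Real.cosh t) * g t)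
        =O[atTop] fun t => Real.exp (-y * Real.cosh t + c * t) := by
      rw [isBigO_iff]
      refine ⟨C, ?_⟩
      filter_upwards [eventually_ge_atTop 0] with t ht
      rw [Real.norm_eq_abs, Real.norm_eq_abs, abs_mul, Real.abs_exp, Real.abs_exp, Real.exp_add]
      have hb := hbound t ht
      have e1 := Real.exp_pos (-y * Real.cosh t)
      nlinarith [abs_nonneg (g t), Real.exp_pos (c * t)]
    have := h1.trans (isLittleO_expcosh y c hy).isBigO
    simpa using this

lemma besselK_integrable (ν : ℝ) {y : ℝ} (hy : 0 < y) :
    IntegrableOn (fun t => Real.exp (-y * Real.cosh t) * Real.cosh (ν * t)) (Ioi 0) := by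
  apply integrableOn_expcosh hy (Real.continuous_cosh.comp (continuous_const.mul continuous_id))
    (C := 1) (c := |ν|)
  intro t ht
  simp only [Function.comp_apply, id_eq]
  rw [abs_of_nonneg (Real.cosh_pos _).le, one_mul]
  calc Real.cosh (ν * t) ≤ Real.exp |ν * t| := cosh_le_exp_abs _
    _ = Real.exp (|ν| * t) := by rw [abs_mul, abs_of_nonneg ht]

lemma besselK_pos (ν : ℝ) {y : ℝ} (hy : 0 < y) : 0 < besselK ν y := by
  rw [besselK, setIntegral_pos_iff_support_of_nonneg_ae]
  · refine lt_of_lt_of_le ?_ (measure_mono (?_ : Ioi (0:ℝ) ⊆ _))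
    · simp [Real.volume_Ioi]
    · intro t ht
      refine ⟨?_, ht⟩
      simp only [Function.mem_support]
      positivity
  · refine Filter.Eventually.of_forall fun t => ?_
    positivity
  · exact besselK_integrable ν hy

lemma setIntegral_lt_of_lt {f g : ℝ → ℝ} (hf : IntegrableOn f (Ioi 0)) (hg : IntegrableOn g (Ioi 0))
    (hlt : ∀ t ∈ Ioi (0:ℝ), f t < g t) :
    ∫ t in Ioi (0:ℝ), f t < ∫ t in Ioi (0:ℝ), g t := by
  have key : 0 < ∫ t in Ioi (0:ℝ), (g t - f t) := by
    rw [setIntegral_pos_iff_support_of_nonneg_ae]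
    · refine lt_of_lt_of_le ?_ (measure_mono (?_ : Ioi (0:ℝ) ⊆ _))
      · simp [Real.volume_Ioi]
      · exact fun t ht => ⟨sub_ne_zero.2 (hlt t ht).ne', ht⟩
    · exact (ae_restrict_iff' measurableSet_Ioi).2
        (Filter.Eventually.of_forall fun t ht => sub_nonneg.2 (hlt t ht).le)
    · exact hg.sub hf
  have h2 := integral_sub hg hf
  rw [h2] at key
  linarith

lemma sinhsinh_integrable (μ : ℝ) {y : ℝ} (hy : 0 < y) :
    IntegrableOn (fun t => Real.exp (-y * Real.cosh t) * (Real.sinh t * Real.sinh (μ * t)))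
      (Ioi 0) := by
  apply integrableOn_expcosh hy
    (Real.continuous_sinh.mul (Real.continuous_sinh.comp (continuous_const.mul continuous_id)))
    (C := 1) (c := |μ| + 1)
  intro t ht
  simp only [Function.comp_apply, id_eq, one_mul]
  have h1 : |Real.sinh t| ≤ Real.exp t := (abs_sinh_le_exp_abs t).trans_eq (by rw [abs_of_nonneg ht])
  have h2 : |Real.sinh (μ * t)| ≤ Real.exp (|μ| * t) :=
    (abs_sinh_le_exp_abs _).trans_eq (by rw [abs_mul, abs_of_nonneg ht])
  calc |Real.sinh t * Real.sinh (μ * t)| = |Real.sinh t| * |Real.sinh (μ * t)| := abs_mul _ _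
    _ ≤ Real.exp t * Real.exp (|μ| * t) :=
        mul_le_mul h1 h2 (abs_nonneg _) (Real.exp_pos t).le
    _ = Real.exp ((|μ| + 1) * t) := by rw [← Real.exp_add]; ring_nf

lemma deriv_integrable (μ : ℝ) {y : ℝ} (hy : 0 < y) :
    IntegrableOn (fun t => Real.exp (-y * Real.cosh t) *
      (μ * Real.cosh (μ * t) - y * Real.sinh t * Real.sinh (μ * t))) (Ioi 0) := by
  apply integrableOn_expcosh hy (by continuity) (C := |μ| + y) (c := |μ| + 1)
  intro t ht
  have h1 : |Real.sinh t| ≤ Real.exp t := (abs_sinh_le_exp_abs t).trans_eq (by rw [abs_of_nonneg ht])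
  have h2 : |Real.sinh (μ * t)| ≤ Real.exp (|μ| * t) :=
    (abs_sinh_le_exp_abs _).trans_eq (by rw [abs_mul, abs_of_nonneg ht])
  have h3 : Real.cosh (μ * t) ≤ Real.exp (|μ| * t) :=
    (cosh_le_exp_abs _).trans_eq (by rw [abs_mul, abs_of_nonneg ht])
  have h4 : Real.exp (|μ| * t) ≤ Real.exp ((|μ| + 1) * t) := by
    apply Real.exp_le_exp.2; nlinarith [abs_nonneg μ]
  have h5 : Real.exp t * Real.exp (|μ| * t) = Real.exp ((|μ| + 1) * t) := by
    rw [← Real.exp_add]; ring_nf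
  calc |μ * Real.cosh (μ * t) - y * Real.sinh t * Real.sinh (μ * t)|
      ≤ |μ * Real.cosh (μ * t)| + |y * Real.sinh t * Real.sinh (μ * t)| := abs_sub _ _
    _ = |μ| * Real.cosh (μ * t) + y * (|Real.sinh t| * |Real.sinh (μ * t)|) := by
        rw [abs_mul, abs_mul, abs_mul, abs_of_nonneg (Real.cosh_pos _).le, abs_of_nonneg hy.le]
        ring
    _ ≤ (|μ| + y) * Real.exp ((|μ| + 1) * t) := by
        have hb : |Real.sinh t| * |Real.sinh (μ * t)| ≤ Real.exp ((|μ| + 1) * t) := by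
          rw [← h5]
          exact mul_le_mul h1 h2 (abs_nonneg _) (Real.exp_pos t).le
        have hc : Real.cosh (μ * t) ≤ Real.exp ((|μ| + 1) * t) := h3.trans h4
        nlinarith [abs_nonneg μ, Real.cosh_pos (μ * t),
          mul_nonneg (abs_nonneg (Real.sinh t)) (abs_nonneg (Real.sinh (μ * t)))]

lemma besselK_recurrence (ν : ℝ) {y : ℝ} (hy : 0 < y) :
    besselK (ν + 2) y - besselK ν y = (2 * (ν + 1) / y) * besselK (ν + 1) y := by
  set μ : ℝ := ν + 1 with hμdef
  -- integration by parts
  have hderiv : ∀ x ∈ Ici (0:ℝ),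
      HasDerivAt (fun t => Real.exp (-y * Real.cosh t) * Real.sinh (μ * t))
        (Real.exp (-y * Real.cosh x) *
          (μ * Real.cosh (μ * x) - y * Real.sinh x * Real.sinh (μ * x))) x := by
    intro x _
    have h1 : HasDerivAt (fun t => Real.exp (-y * Real.cosh t))
        (Real.exp (-y * Real.cosh x) * (-y * Real.sinh x)) x :=
      ((Real.hasDerivAt_cosh x).const_mul (-y)).exp
    have h2 : HasDerivAt (fun t => Real.sinh (μ * t)) (Real.cosh (μ * x) * μ) x := by
      simpa using ((hasDerivAt_id x).const_mul μ).sinh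
    have := h1.mul h2
    exact this.congr_deriv (by ring)
  have htend : Tendsto (fun t => Real.exp (-y * Real.cosh t) * Real.sinh (μ * t)) atTop (𝓝 0) := by
    apply squeeze_zero_norm' (a := fun t => Real.exp (-(y * Real.cosh t - |μ| * t)))
    · filter_upwards [eventually_ge_atTop 0] with t ht
      rw [norm_mul, Real.norm_eq_abs, Real.norm_eq_abs, Real.abs_exp]
      have h2 : |Real.sinh (μ * t)| ≤ Real.exp (|μ| * t) :=
        (abs_sinh_le_exp_abs _).trans_eq (by rw [abs_mul, abs_of_nonneg ht])
      calc Real.exp (-y * Real.cosh t) * |Real.sinh (μ * t)|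
          ≤ Real.exp (-y * Real.cosh t) * Real.exp (|μ| * t) :=
            mul_le_mul_of_nonneg_left h2 (Real.exp_pos _).le
        _ = Real.exp (-(y * Real.cosh t - |μ| * t)) := by rw [← Real.exp_add]; ring_nf
    · exact Real.tendsto_exp_atBot.comp
        (tendsto_neg_atTop_atBot.comp (tendsto_ycosh y |μ| hy))
  have ibp := integral_Ioi_of_hasDerivAt_of_tendsto' hderiv (deriv_integrable μ hy) htend
  simp only [Real.cosh_zero, mul_zero, Real.sinh_zero, sub_zero, zero_sub, neg_eq_zero] at ibp
  -- ibp : ∫ x in Ioi 0, exp(-y cosh x) * (μ cosh(μx) - y sinh x sinh(μx)) = 0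
  have hsplit : ∫ x in Ioi (0:ℝ), Real.exp (-y * Real.cosh x) *
      (μ * Real.cosh (μ * x) - y * Real.sinh x * Real.sinh (μ * x))
      = μ * besselK μ y - y * ∫ t in Ioi (0:ℝ),
          Real.exp (-y * Real.cosh t) * (Real.sinh t * Real.sinh (μ * t)) := by
    rw [besselK, ← integral_const_mul, ← integral_const_mul, ← integral_sub
      (((besselK_integrable μ hy)).const_mul μ) ((sinhsinh_integrable μ hy).const_mul y)]
    apply integral_congr_ae
    filter_upwards with t
    ring
  rw [hsplit] at ibp
  -- now the recurrence
  have hI : y * (∫ t in Ioi (0:ℝ), Real.exp (-y * Real.cosh t) *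
      (Real.sinh t * Real.sinh (μ * t))) = μ * besselK μ y := by linarith
  have hid : ∀ t : ℝ, Real.cosh ((ν + 2) * t) - Real.cosh (ν * t)
      = 2 * (Real.sinh t * Real.sinh (μ * t)) := by
    intro t
    have e1 : (ν + 2) * t = μ * t + t := by rw [hμdef]; ring
    have e2 : ν * t = μ * t - t := by rw [hμdef]; ring
    rw [e1, e2, Real.cosh_add, Real.cosh_sub]
    ring
  have : besselK (ν + 2) y - besselK ν y = 2 * ∫ t in Ioi (0:ℝ),
      Real.exp (-y * Real.cosh t) * (Real.sinh t * Real.sinh (μ * t)) := by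
    rw [besselK, besselK, ← integral_sub (besselK_integrable (ν+2) hy) (besselK_integrable ν hy),
      ← integral_const_mul]
    apply integral_congr_ae
    filter_upwards with t
    rw [← mul_sub, hid t]
    ring
  rw [this, div_mul_eq_mul_div, eq_div_iff hy.ne']
  linarith

lemma cosh_mul_cosh_id (ν t : ℝ) : Real.cosh (ν * t) * Real.cosh ((ν + 2) * t)
    = Real.cosh ((ν + 1) * t) ^ 2 + Real.sinh t ^ 2 := by
  have e1 : ν * t = (ν + 1) * t - t := by ring
  have e2 : (ν + 2) * t = (ν + 1) * t + t := by ring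
  rw [e1, e2, Real.cosh_sub, Real.cosh_add]
  have h1 := Real.cosh_sq ((ν + 1) * t)
  have h2 := Real.cosh_sq t
  nlinarith [h1, h2]

lemma sqrtcosh_integrable (ν : ℝ) {y : ℝ} (hy : 0 < y) :
    IntegrableOn (fun t => Real.exp (-y * Real.cosh t) *
      Real.sqrt (Real.cosh (ν * t) * Real.cosh ((ν + 2) * t))) (Ioi 0) := by
  apply integrableOn_expcosh hy
    (((Real.continuous_cosh.comp (continuous_const.mul continuous_id)).mul
      (Real.continuous_cosh.comp (continuous_const.mul continuous_id))).sqrt)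
    (C := 1) (c := (|ν| + |ν + 2|) / 2)
  intro t ht
  rw [abs_of_nonneg (Real.sqrt_nonneg _), one_mul]
  have hb : Real.cosh (ν * t) * Real.cosh ((ν + 2) * t)
      ≤ Real.exp ((|ν| + |ν + 2|) / 2 * t) ^ 2 := by
    have h1 : Real.cosh (ν * t) ≤ Real.exp (|ν| * t) :=
      (cosh_le_exp_abs _).trans_eq (by rw [abs_mul, abs_of_nonneg ht])
    have h2 : Real.cosh ((ν + 2) * t) ≤ Real.exp (|ν + 2| * t) :=
      (cosh_le_exp_abs _).trans_eq (by rw [abs_mul, abs_of_nonneg ht])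
    have h3 : Real.exp ((|ν| + |ν + 2|) / 2 * t) ^ 2
        = Real.exp (|ν| * t) * Real.exp (|ν + 2| * t) := by
      rw [pow_two, ← Real.exp_add, ← Real.exp_add]; ring_nf
    rw [h3]
    exact mul_le_mul h1 h2 (Real.cosh_pos _).le (Real.exp_pos _).le
  calc Real.sqrt (Real.cosh (ν * t) * Real.cosh ((ν + 2) * t))
      ≤ Real.sqrt (Real.exp ((|ν| + |ν + 2|) / 2 * t) ^ 2) := Real.sqrt_le_sqrt hb
    _ = Real.exp ((|ν| + |ν + 2|) / 2 * t) := Real.sqrt_sq (Real.exp_pos _).le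

lemma sqrt_rpow_two {x : ℝ} (hx : 0 ≤ x) : Real.sqrt x ^ (2:ℝ) = x := by
  rw [show (2:ℝ) = ((2:ℕ):ℝ) by norm_num, Real.rpow_natCast, Real.sq_sqrt hx]

lemma besselK_turan (ν : ℝ) {y : ℝ} (hy : 0 < y) :
    besselK (ν + 1) y ^ 2 < besselK ν y * besselK (ν + 2) y := by
  set f : ℝ → ℝ := fun t => Real.sqrt (Real.exp (-y * Real.cosh t) * Real.cosh (ν * t)) with hf
  set g : ℝ → ℝ := fun t =>
    Real.sqrt (Real.exp (-y * Real.cosh t) * Real.cosh ((ν + 2) * t)) with hg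
  have hfg : ∀ t, f t * g t = Real.exp (-y * Real.cosh t) *
      Real.sqrt (Real.cosh (ν * t) * Real.cosh ((ν + 2) * t)) := by
    intro t
    rw [hf, hg]
    rw [← Real.sqrt_mul (by positivity),
      show Real.exp (-y * Real.cosh t) * Real.cosh (ν * t) *
        (Real.exp (-y * Real.cosh t) * Real.cosh ((ν + 2) * t))
        = Real.exp (-y * Real.cosh t) ^ 2 * (Real.cosh (ν * t) * Real.cosh ((ν + 2) * t)) by ring,
      Real.sqrt_mul (by positivity), Real.sqrt_sq (Real.exp_pos _).le]
  have hconj : Real.HolderConjugate 2 2 := ⟨by norm_num, by norm_num, by norm_num⟩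
  have h2 : ENNReal.ofReal (2:ℝ) = 2 := by
    rw [ENNReal.ofReal_ofNat]
  have hcont1 : Continuous f :=
    ((Real.continuous_exp.comp (continuous_const.mul Real.continuous_cosh)).mul
      (Real.continuous_cosh.comp (continuous_const.mul continuous_id))).sqrt
  have hcont2 : Continuous g :=
    ((Real.continuous_exp.comp (continuous_const.mul Real.continuous_cosh)).mul
      (Real.continuous_cosh.comp (continuous_const.mul continuous_id))).sqrt
  have hfsq : ∀ t, f t ^ (2:ℝ) = Real.exp (-y * Real.cosh t) * Real.cosh (ν * t) := fun t =>
    sqrt_rpow_two (by positivity)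
  have hgsq : ∀ t, g t ^ (2:ℝ) = Real.exp (-y * Real.cosh t) * Real.cosh ((ν + 2) * t) :=
    fun t => sqrt_rpow_two (by positivity)
  have hfsqN : ∀ t, f t ^ (2:ℕ) = Real.exp (-y * Real.cosh t) * Real.cosh (ν * t) := fun t =>
    Real.sq_sqrt (by positivity)
  have hgsqN : ∀ t, g t ^ (2:ℕ) = Real.exp (-y * Real.cosh t) * Real.cosh ((ν + 2) * t) :=
    fun t => Real.sq_sqrt (by positivity)
  have hfmem : MemLp f (ENNReal.ofReal (2:ℝ)) (volume.restrict (Ioi 0)) := by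
    rw [h2, memLp_two_iff_integrable_sq]
    · apply (besselK_integrable ν hy).congr
      exact Filter.Eventually.of_forall fun t => (hfsqN t).symm
    · exact hcont1.aestronglyMeasurable
  have hgmem : MemLp g (ENNReal.ofReal (2:ℝ)) (volume.restrict (Ioi 0)) := by
    rw [h2, memLp_two_iff_integrable_sq]
    · apply (besselK_integrable (ν + 2) hy).congr
      exact Filter.Eventually.of_forall fun t => (hgsqN t).symm
    · exact hcont2.aestronglyMeasurable
  have holder := integral_mul_le_Lp_mul_Lq_of_nonneg hconj
    (Filter.Eventually.of_forall fun t => Real.sqrt_nonneg _)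
    (Filter.Eventually.of_forall fun t => Real.sqrt_nonneg _) hfmem hgmem
  -- rewrite the three integrals in holder
  have eL : ∫ t in Ioi (0:ℝ), f t * g t = ∫ t in Ioi (0:ℝ), Real.exp (-y * Real.cosh t) *
      Real.sqrt (Real.cosh (ν * t) * Real.cosh ((ν + 2) * t)) :=
    integral_congr_ae (Filter.Eventually.of_forall fun t => hfg t)
  have eF : ∫ t in Ioi (0:ℝ), f t ^ (2:ℝ) = besselK ν y := by
    rw [besselK]; exact integral_congr_ae (Filter.Eventually.of_forall fun t => hfsq t)
  have eG : ∫ t in Ioi (0:ℝ), g t ^ (2:ℝ) = besselK (ν + 2) y := by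
    rw [besselK]; exact integral_congr_ae (Filter.Eventually.of_forall fun t => hgsq t)
  rw [eL, eF, eG] at holder
  -- strict inequality
  have hstrict : besselK (ν + 1) y < ∫ t in Ioi (0:ℝ), Real.exp (-y * Real.cosh t) *
      Real.sqrt (Real.cosh (ν * t) * Real.cosh ((ν + 2) * t)) := by
    rw [besselK]
    apply setIntegral_lt_of_lt (besselK_integrable (ν + 1) hy) (sqrtcosh_integrable ν hy)
    intro t ht
    apply mul_lt_mul_of_pos_left _ (Real.exp_pos _)
    rw [Real.lt_sqrt (Real.cosh_pos _).le, cosh_mul_cosh_id]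
    have := Real.sinh_pos_iff.2 ht
    nlinarith
  have key : besselK (ν + 1) y < besselK ν y ^ (1/2:ℝ) * besselK (ν + 2) y ^ (1/2:ℝ) :=
    hstrict.trans_le holder
  have ha := besselK_pos ν hy
  have hb := besselK_pos (ν + 1) hy
  have hc := besselK_pos (ν + 2) hy
  have h12a : besselK ν y ^ (1/2:ℝ) * besselK ν y ^ (1/2:ℝ) = besselK ν y := by
    rw [← Real.rpow_add ha]; norm_num
  have h12c : besselK (ν + 2) y ^ (1/2:ℝ) * besselK (ν + 2) y ^ (1/2:ℝ) = besselK (ν + 2) y := by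
    rw [← Real.rpow_add hc]; norm_num
  calc besselK (ν + 1) y ^ 2 = besselK (ν + 1) y * besselK (ν + 1) y := sq _
    _ < (besselK ν y ^ (1/2:ℝ) * besselK (ν + 2) y ^ (1/2:ℝ)) *
        (besselK ν y ^ (1/2:ℝ) * besselK (ν + 2) y ^ (1/2:ℝ)) :=
        mul_self_lt_mul_self hb.le key
    _ = (besselK ν y ^ (1/2:ℝ) * besselK ν y ^ (1/2:ℝ)) *
        (besselK (ν + 2) y ^ (1/2:ℝ) * besselK (ν + 2) y ^ (1/2:ℝ)) := by ring
    _ = besselK ν y * besselK (ν + 2) y := by rw [h12a, h12c]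

lemma final_algebra {a b c y μ : ℝ} (hy : 0 < y) (hμ : 0 < μ) (ha : 0 < a) (hb : 0 < b)
    (hc : 0 < c) (hrec : c - a = 2 * μ / y * b) (hturan : b ^ 2 < a * c) :
    a / b > (1 / y) * (y ^ 2 / (Real.sqrt (y ^ 2 + μ ^ 2) - μ) - 2 * μ) := by
  set s : ℝ := Real.sqrt (y ^ 2 + μ ^ 2) with hsdef
  have hs2 : s ^ 2 = y ^ 2 + μ ^ 2 := Real.sq_sqrt (by positivity)
  have hs0 : 0 < s := Real.sqrt_pos.2 (by positivity)
  have hsμ : μ < s := by nlinarith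
  have hsub : 0 < s - μ := by linarith
  have hya : y * a = y * c - 2 * μ * b := by
    have h1 : y * (c - a) = 2 * μ * b := by
      rw [hrec]; field_simp
    linarith
  have hstep : y * b ^ 2 + 2 * μ * b * c < y * c ^ 2 := by
    have h1 : y * b ^ 2 < y * (a * c) := by nlinarith
    nlinarith
  have key : y * b + μ * c < s * c := by
    nlinarith [sq_nonneg (y * b + μ * c), mul_pos hy hb, mul_pos hμ hc, mul_pos hs0 hc]
  have ha_eq : a = c - 2 * μ * b / y := by
    rw [eq_sub_iff_add_eq]
    field_simp at hya ⊢
    linarith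
  rw [gt_iff_lt, lt_div_iff₀ hb]
  have e : (1 / y) * (y ^ 2 / (s - μ) - 2 * μ) * b = y * b / (s - μ) - 2 * μ * b / y := by
    field_simp
  rw [e, ha_eq]
  have h3 : y * b / (s - μ) < c := by
    rw [div_lt_iff₀ hsub]
    nlinarith
  linarith

theorem stmt_1 (ν y : ℝ) (hν : 0 < ν) (hy : 0 < y) :
    besselK ν y / besselK (ν + 1) y >
      (1 / y) * (y ^ 2 / (Real.sqrt (y ^ 2 + (ν + 1) ^ 2) - (ν + 1)) - 2 * (ν + 1)) := by
  exact final_algebra hy (by linarith) (besselK_pos ν hy) (besselK_pos (ν + 1) hy)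
    (besselK_pos (ν + 2) hy) (by linarith [besselK_recurrence ν hy]) (besselK_turan ν hy)
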